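/- Let V be an n-dimensional complex vector space, let 0 → E → V → Q → 0 be an exact sequence with dim Q = r, and fix nonzero elements η_Q ∈ ⋀^r Q* and a volume form vol ∈ ⋀^n V* of the form vol = η ∧ μ, where η ∈ ⋀^r V* is the pullback of η_Q and μ ∈ ⋀^{n−r} V*. Then the linear map φ : Q → V defined as the composition q ↦ η_Q(q, ·) ∈ ⋀^{r−1} Q* ↦ its pullback in ⋀^{r−1} V* ↦ wedge with μ in ⋀^{n−1} V* ↦ the unique vector v with vol(v, ·) equal to that (n−1)-form, is a splitting of the sequence: the composition Q → V → Q is the identity. -/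

import Mathlib

open scoped TensorProduct

/-- The wedge product of ℂ-valued alternating forms, via `AlternatingMap.domCoprod`. -/
noncomputable def wedge {V : Type*} [AddCommGroup V] [Module ℂ V] {a b : ℕ}
    (α : V [⋀^Fin a]→ₗ[ℂ] ℂ) (β : V [⋀^Fin b]→ₗ[ℂ] ℂ) :
    V [⋀^Fin (a + b)]→ₗ[ℂ] ℂ :=
  (((TensorProduct.lid ℂ ℂ).toLinearMap).compAlternatingMap
      (α.domCoprod β)).domDomCongr finSumFinEquiv

lemma wedge_apply {V : Type*} [AddCommGroup V] [Module ℂ V] {a b : ℕ}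
    (α : V [⋀^Fin a]→ₗ[ℂ] ℂ) (β : V [⋀^Fin b]→ₗ[ℂ] ℂ) (t : Fin (a+b) → V) :
    wedge α β t = ∑ σ : Equiv.Perm.ModSumCongr (Fin a) (Fin b),
      (TensorProduct.lid ℂ ℂ) (AlternatingMap.domCoprod.summand α β σ (t ∘ finSumFinEquiv)) := by
  rw [wedge]
  rw [AlternatingMap.domDomCongr_apply, LinearMap.compAlternatingMap_apply,
    AlternatingMap.domCoprod_apply]
  rw [← AlternatingMap.domCoprod_coe, AlternatingMap.domCoprod_coe, MultilinearMap.sum_apply]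
  rw [map_sum]
  rfl

/-- Key computation: the wedge of a pulled-back form with another form, evaluated on a tuple
whose second block lies in the kernel of `p`, has only the identity shuffle contributing. -/
lemma wedge_split {V Q : Type*} [AddCommGroup V] [Module ℂ V] [AddCommGroup Q] [Module ℂ Q]
    {a b : ℕ} (γ : Q [⋀^Fin a]→ₗ[ℂ] ℂ) (β : V [⋀^Fin b]→ₗ[ℂ] ℂ) (p : V →ₗ[ℂ] Q)
    (x : Fin a → V) (y : Fin b → V) (hy : ∀ j, p (y j) = 0) :
    wedge (γ.compLinearMap p) β (Fin.append x y) = γ (p ∘ x) * β y := by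
  classical
  rw [wedge_apply]
  have hv : (Fin.append x y) ∘ finSumFinEquiv = Sum.elim x y := by
    funext i
    rcases i with i | i
    · simp
    · simp
  rw [hv]
  refine (Finset.sum_eq_single (Quotient.mk'' (1 : Equiv.Perm (Fin a ⊕ Fin b))) ?_ ?_).trans ?_
  rotate_left 2
  · rw [AlternatingMap.domCoprod.summand_mk'']
    simp only [Equiv.Perm.sign_one, one_smul, MultilinearMap.domDomCongr_apply,
      MultilinearMap.domCoprod_apply, Equiv.Perm.coe_one, Function.comp_apply, id_eq]
    simp [AlternatingMap.compLinearMap_apply, Function.comp_def]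
  · intro σq _ hne
    refine Quotient.inductionOn' σq (fun σ hne => ?_) hne
    by_cases h : Set.MapsTo σ (Set.range Sum.inl) (Set.range Sum.inl)
    · exfalso
      apply hne
      obtain ⟨u, hs⟩ := Equiv.Perm.mem_sumCongrHom_range_of_perm_mapsTo_inl h
      apply Quotient.sound'
      rw [QuotientGroup.leftRel_apply]
      exact ⟨u⁻¹, by rw [map_inv, hs, mul_one]⟩
    · rw [Set.mapsTo_iff_image_subset] at h
      rw [Set.not_subset] at h
      obtain ⟨z, hz1, hz2⟩ := h
      obtain ⟨w, ⟨i, rfl⟩, rfl⟩ := hz1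
      rcases hσi : σ (Sum.inl i) with k | j
      · exact absurd (hσi ▸ Set.mem_range_self k) hz2
      · rw [AlternatingMap.domCoprod.summand_mk'']
        have hz : ((γ.compLinearMap p) : MultilinearMap ℂ (fun _ : Fin a => V) ℂ)
            (fun i' => Sum.elim x y (σ (Sum.inl i'))) = 0 := by
          have : ((γ.compLinearMap p) : MultilinearMap ℂ (fun _ : Fin a => V) ℂ)
              (fun i' => Sum.elim x y (σ (Sum.inl i'))) =
              γ (fun i' => p (Sum.elim x y (σ (Sum.inl i')))) := rfl
          rw [this]
          apply AlternatingMap.map_coord_zero _ i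
          rw [hσi]
          simpa using hy j
        simp only [MultilinearMap.smul_apply, MultilinearMap.domDomCongr_apply,
          MultilinearMap.domCoprod_apply, Function.comp_apply]
        rw [hz, TensorProduct.zero_tmul, smul_zero, map_zero]
  · intro h; simp at h

/-- Contraction with a nonzero top form is injective. -/
lemma curry_eq_zero_imp {Q : Type*} [AddCommGroup Q] [Module ℂ Q] [FiniteDimensional ℂ Q]
    {s : ℕ} (hQ : Module.finrank ℂ Q = s + 1) (ηQ : Q [⋀^Fin (s + 1)]→ₗ[ℂ] ℂ)
    (hηQ : ηQ ≠ 0) (u : Q) (h : ηQ.curryLeft u = 0) : u = 0 := by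
  classical
  obtain ⟨z0, hz0⟩ : ∃ z0, ηQ z0 ≠ 0 := by
    by_contra hc
    push_neg at hc
    exact hηQ (AlternatingMap.ext hc)
  have hli : LinearIndependent ℂ z0 := by
    by_contra hdep
    exact hz0 (ηQ.map_linearDependent z0 hdep)
  have bcard : Fintype.card (Fin (s + 1)) = Module.finrank ℂ Q := by simp [hQ]
  let b := basisOfLinearIndependentOfCardEqFinrank hli bcard
  have hb : ⇑b = z0 := coe_basisOfLinearIndependentOfCardEqFinrank _ _
  have hcoord : ∀ j : Fin (s + 1), b.repr u j = 0 := by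
    intro j
    have h1 : (ηQ.curryLeft u) (Fin.removeNth j z0) = 0 := by rw [h]; rfl
    have hu : u = ∑ i, b.repr u i • z0 i := by
      conv_lhs => rw [← b.sum_repr u]
      simp [hb]
    have h1' : ηQ (Fin.cons u (Fin.removeNth j z0)) = 0 := h1
    have hexp : ηQ (Fin.cons u (Fin.removeNth j z0)) =
        ∑ i, b.repr u i • ηQ (Fin.cons (z0 i) (Fin.removeNth j z0)) := by
      have hupd : (Fin.cons (∑ i, b.repr u i • z0 i) (Fin.removeNth j z0) : Fin (s+1) → Q) =
          Function.update (Fin.cons u (Fin.removeNth j z0)) 0 (∑ i, b.repr u i • z0 i) :=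
        (@Fin.update_cons_zero s (fun _ => Q) u (Fin.removeNth j z0) _).symm
      conv_lhs => rw [hu]
      rw [hupd, ηQ.map_update_sum]
      refine Finset.sum_congr rfl fun i _ => ?_
      rw [ηQ.map_update_smul]
      congr 1
      refine congrArg ηQ ?_
      exact @Fin.update_cons_zero s (fun _ => Q) u (Fin.removeNth j z0) (z0 i)
    rw [hexp] at h1'
    rw [Finset.sum_eq_single j] at h1'
    · have hperm : (Fin.cons (z0 j) (Fin.removeNth j z0) : Fin (s+1) → Q) =
          z0 ∘ (j.cycleRange.symm : Equiv.Perm (Fin (s+1))) := by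
        funext i
        refine Fin.cases ?_ ?_ i
        · simp
        · intro k
          simp [Fin.removeNth]
      have hval : ηQ (Fin.cons (z0 j) (Fin.removeNth j z0)) ≠ 0 := by
        rw [hperm, AlternatingMap.map_perm]
        rw [ne_eq, smul_eq_zero_iff_eq]
        exact hz0
      exact (smul_eq_zero.mp h1').resolve_right hval
    · intro i _ hij
      obtain ⟨k, hk⟩ := Fin.exists_succAbove_eq hij
      have hz : ηQ (Fin.cons (z0 i) (Fin.removeNth j z0)) = 0 := by
        have heq : (Fin.cons (z0 i) (Fin.removeNth j z0) : Fin (s+1) → Q) 0 =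
            (Fin.cons (z0 i) (Fin.removeNth j z0) : Fin (s+1) → Q) k.succ := by
          simp [Fin.removeNth, hk]
        exact ηQ.map_eq_zero_of_eq _ heq (Fin.succ_ne_zero k).symm
      rw [hz, smul_zero]
    · intro hj
      simp at hj
  have : b.repr u = 0 := Finsupp.ext hcoord
  have := congrArg b.repr.symm this
  simpa using this

/-- Let `V` be an `n`-dimensional complex vector space, let
`0 → E → V → Q → 0` be exact (`E = ker p`, `p : V → Q` surjective) with `dim Q = r = s + 1`,
and fix a nonzero `η_Q ∈ ⋀^r Q*` and a volume form `vol = η ∧ μ ∈ ⋀^n V*` where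
`η = p^* η_Q` and `μ ∈ ⋀^{n-r} V*`.  Then the map `φ : Q → V` defined by
`q ↦ η_Q(q,·) ↦ p^*(η_Q(q,·)) ↦ p^*(η_Q(q,·)) ∧ μ ↦ the unique v with vol(v,·) = that form`
is a splitting of the sequence: `p ∘ φ = id`.  We state this as: whenever `v ∈ V` satisfies
the defining equation `vol(v, ·) = p^*(η_Q(q, ·)) ∧ μ`, then `p v = q`. -/
theorem stmt_9 (V Q : Type*) [AddCommGroup V] [Module ℂ V] [FiniteDimensional ℂ V]
    [AddCommGroup Q] [Module ℂ Q] [FiniteDimensional ℂ Q]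
    (s m : ℕ)
    (hdim : Module.finrank ℂ V = s + 1 + m)
    (hQ : Module.finrank ℂ Q = s + 1)
    (p : V →ₗ[ℂ] Q) (hp : Function.Surjective p)
    (ηQ : Q [⋀^Fin (s + 1)]→ₗ[ℂ] ℂ) (hηQ : ηQ ≠ 0)
    (μ : V [⋀^Fin m]→ₗ[ℂ] ℂ)
    (hvol : wedge (ηQ.compLinearMap p) μ ≠ 0) :
    ∀ (q : Q) (v : V),
      (∀ w : Fin (s + m) → V,
          ((wedge (ηQ.compLinearMap p) μ).domDomCongr
              (finCongr (by omega : s + 1 + m = s + m + 1))) (Fin.cons v w) =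
            wedge ((ηQ.curryLeft q).compLinearMap p) μ w) →
      p v = q := by
  classical
  intro q v H
  -- basis of Q and lifts
  obtain ⟨bQ⟩ : Nonempty (Module.Basis (Fin (s + 1)) ℂ Q) := ⟨Module.finBasisOfFinrankEq ℂ Q hQ⟩
  choose x hx using fun i => hp (bQ i)
  -- basis of the kernel
  have hker : Module.finrank ℂ (LinearMap.ker p) = m := by
    have h1 := LinearMap.finrank_range_add_finrank_ker p
    rw [LinearMap.range_eq_top.2 hp, finrank_top] at h1
    omega
  obtain ⟨bE⟩ : Nonempty (Module.Basis (Fin m) ℂ (LinearMap.ker p)) :=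
    ⟨Module.finBasisOfFinrankEq ℂ _ hker⟩
  set y : Fin m → V := fun j => ((bE j : LinearMap.ker p) : V) with hy_def
  have hy : ∀ j, p (y j) = 0 := fun j => (bE j).2
  -- linear independence of the appended family
  have hxli : LinearIndependent ℂ x := by
    have h2 : p ∘ x = bQ := funext hx
    have h3 : LinearIndependent ℂ (p ∘ x) := h2 ▸ bQ.linearIndependent
    exact h3.of_comp p
  have hyli : LinearIndependent ℂ y :=
    bE.linearIndependent.map' (LinearMap.ker p).subtype (Submodule.ker_subtype _)
  have hdisj : Disjoint (Submodule.span ℂ (Set.range x)) (Submodule.span ℂ (Set.range y)) := by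
    rw [Submodule.disjoint_def]
    intro z hz1 hz2
    have hpz : p z = 0 := by
      have hle : Submodule.span ℂ (Set.range y) ≤ LinearMap.ker p :=
        Submodule.span_le.2 (by rintro _ ⟨j, rfl⟩; exact LinearMap.mem_ker.2 (hy j))
      exact LinearMap.mem_ker.1 (hle hz2)
    obtain ⟨c, rfl⟩ := (Submodule.mem_span_range_iff_exists_fun ℂ).1 hz1
    have : ∑ i, c i • bQ i = 0 := by
      rw [← hpz]
      simp [map_sum, hx]
    have hc : ∀ i, c i = 0 := Fintype.linearIndependent_iff.1 bQ.linearIndependent c this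
    simp [hc]
  have hsli : LinearIndependent ℂ (Sum.elim x y) :=
    linearIndependent_sum.2 ⟨hxli, hyli, hdisj⟩
  have htli : LinearIndependent ℂ (Fin.append x y) := by
    have he : Fin.append x y = Sum.elim x y ∘ finSumFinEquiv.symm := by
      funext i
      obtain ⟨j, rfl⟩ := finSumFinEquiv.surjective i
      rcases j with j | j <;> simp
    rw [he]
    exact hsli.comp _ finSumFinEquiv.symm.injective
  have bcard : Fintype.card (Fin (s + 1 + m)) = Module.finrank ℂ V := by simp [hdim]
  haveI : Nonempty (Fin (s + 1 + m)) := ⟨⟨0, by omega⟩⟩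
  let b := basisOfLinearIndependentOfCardEqFinrank htli bcard
  have hb : ⇑b = Fin.append x y := coe_basisOfLinearIndependentOfCardEqFinrank _ _
  -- μ is nonzero on the kernel basis
  have hwt : wedge (ηQ.compLinearMap p) μ (Fin.append x y) ≠ 0 := by
    intro h0
    apply hvol
    refine (AlternatingMap.map_basis_eq_zero_iff b _).1 ?_
    rw [hb]
    exact h0
  have hμ : μ y ≠ 0 := by
    intro h0
    apply hwt
    rw [wedge_split ηQ μ p x y hy, h0, mul_zero]
  -- the key pointwise identity
  have hkey : ∀ z : Fin s → Q, ηQ (Fin.cons (p v) z) = ηQ (Fin.cons q z) := by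
    intro z
    choose xz hxz using fun i => hp (z i)
    have H1 := H (Fin.append xz y)
    rw [AlternatingMap.domDomCongr_apply] at H1
    have harg : (Fin.cons v (Fin.append xz y)) ∘ (finCongr (by omega : s + 1 + m = s + m + 1)) =
        Fin.append (Fin.cons v xz) y := by
      rw [Fin.append_cons]
      rfl
    rw [harg] at H1
    rw [wedge_split ηQ μ p (Fin.cons v xz) y hy] at H1
    rw [wedge_split (ηQ.curryLeft q) μ p xz y hy] at H1
    have e1 : p ∘ Fin.cons v xz = Fin.cons (p v) z := by
      funext i
      refine Fin.cases ?_ ?_ i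
      · simp
      · intro k; simp [hxz]
    have e2 : (ηQ.curryLeft q) (p ∘ xz) = ηQ (Fin.cons q z) := by
      have h3 : p ∘ xz = z := funext hxz
      rw [h3]
      rfl
    rw [e1, e2] at H1
    exact mul_right_cancel₀ hμ H1
  -- conclude
  have hcur : ηQ.curryLeft (p v - q) = 0 := by
    rw [map_sub]
    ext z
    have h4 : (ηQ.curryLeft (p v)) z = ηQ (Fin.cons (p v) z) := rfl
    have h5 : (ηQ.curryLeft q) z = ηQ (Fin.cons q z) := rfl
    simp only [AlternatingMap.sub_apply, AlternatingMap.zero_apply, h4, h5]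
    rw [hkey z, sub_self]
  have := curry_eq_zero_imp hQ ηQ hηQ _ hcur
  rw [sub_eq_zero] at this
  exact this
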